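/- (Discrete-time ELBO for masked diffusion.) Under the discrete-time masked-diffusion setup, the MDLM evidence lower bound is valid: Σ_{i=1}^n Σ_{t=1}^{T−1} E_Q[ 1{z_{t+1}(τ)_i = none} · ((α(t) − α(t+1))/(1 − α(t+1))) · log( π(z_{t+1}(τ)) i (x_i) ) ] ≤ log E_Q[ ∏_{i=1}^n r_i(τ) ], i.e., the weighted masked cross-entropy objective lower-bounds the log-evidence of the clean sequence x. -/
import Mathlib


open scoped Classical

/-- The partially masked sequence `z_s(τ)`: at time `s`, position `i` still shows the
clean token `x i` if `s ≤ τ i`, and is masked (`none`) otherwise. -/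
def maskedSeq {V : Type*} {n : ℕ} (x : Fin n → V) (τ : Fin n → ℕ) (s : ℕ) :
    Fin n → Option V :=
  fun i => if s ≤ τ i then some (x i) else none

/-- The forward-process probability of the masking-time vector `τ`:
`q_fwd(τ) = ∏ i, (α (τ i) − α (τ i + 1))`. -/
noncomputable def fwdProb {n : ℕ} (α : ℕ → ℝ) (τ : Fin n → ℕ) : ℝ :=
  ∏ i, (α (τ i) - α (τ i + 1))

/-- Expectation of `F` over masking-time vectors `τ ∈ {1, …, T−1}ⁿ` under the product
measure `Q` with `P(τ i = t) = α t − α (t+1)`. -/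
noncomputable def expQ {n : ℕ} (α : ℕ → ℝ) (T : ℕ) (F : (Fin n → ℕ) → ℝ) : ℝ :=
  ∑ τ ∈ Fintype.piFinset (fun _ : Fin n => Finset.Icc 1 (T - 1)), fwdProb α τ * F τ

lemma mde_tele (α : ℕ → ℝ) : ∀ t : ℕ, ∑ s ∈ Finset.Icc 1 t, (α s - α (s + 1)) = α 1 - α (t + 1) := by
  intro t
  induction t with
  | zero => simp
  | succ t ih =>
      rw [Finset.sum_Icc_succ_top (by omega), ih]; ring

lemma mde_maskedSeq_update {V : Type*} {n : ℕ} (x : Fin n → V) (τ : Fin n → ℕ) (i : Fin n)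
    (t s : ℕ) (hτ : τ i ≤ t) (hs : s ≤ t) :
    maskedSeq x (Function.update τ i s) (t + 1) = maskedSeq x τ (t + 1) := by
  funext j
  unfold maskedSeq
  by_cases hj : j = i
  · subst hj
    rw [Function.update_self, if_neg (by omega), if_neg (by omega)]
  · rw [Function.update_of_ne hj]

lemma mde_fwdProb_update {n : ℕ} (α : ℕ → ℝ) (τ : Fin n → ℕ) (i : Fin n) (t : ℕ) :
    fwdProb α (Function.update τ i t)
      = (α t - α (t + 1)) * ∏ j ∈ Finset.univ \ {i}, (α (τ j) - α (τ j + 1)) := by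
  unfold fwdProb
  have h : ∀ j, (α (Function.update τ i t j) - α (Function.update τ i t j + 1))
      = Function.update (fun j => α (τ j) - α (τ j + 1)) i (α t - α (t + 1)) j := by
    intro j
    by_cases hj : j = i
    · subst hj; rw [Function.update_self, Function.update_self]
    · rw [Function.update_of_ne hj, Function.update_of_ne hj]
  rw [Finset.prod_congr rfl (fun j _ => h j),
    Finset.prod_update_of_mem (Finset.mem_univ i)]

lemma mde_swap_coord {n : ℕ} (α : ℕ → ℝ) (Tm : ℕ) (i : Fin n) (s t : ℕ)
    (hs : s ∈ Finset.Icc 1 Tm) (ht : t ∈ Finset.Icc 1 Tm)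
    (h : (Fin n → ℕ) → ℝ) (hinv : ∀ τ u, h (Function.update τ i u) = h τ) :
    (α t - α (t + 1)) * ∑ τ ∈ Fintype.piFinset (fun _ : Fin n => Finset.Icc 1 Tm),
        (if τ i = s then fwdProb α τ * h τ else 0)
      = (α s - α (s + 1)) * ∑ τ ∈ Fintype.piFinset (fun _ : Fin n => Finset.Icc 1 Tm),
        (if τ i = t then fwdProb α τ * h τ else 0) := by
  rw [← Finset.sum_filter, ← Finset.sum_filter, Finset.mul_sum, Finset.mul_sum]
  refine Finset.sum_nbij' (fun τ => Function.update τ i t)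
    (fun τ => Function.update τ i s) ?_ ?_ ?_ ?_ ?_
  · intro τ hτ
    simp only [Finset.mem_filter, Fintype.mem_piFinset] at hτ ⊢
    refine ⟨fun j => ?_, Function.update_self i t τ⟩
    by_cases hj : j = i
    · subst hj; rw [Function.update_self]; exact ht
    · rw [Function.update_of_ne hj]; exact hτ.1 j
  · intro τ hτ
    simp only [Finset.mem_filter, Fintype.mem_piFinset] at hτ ⊢
    refine ⟨fun j => ?_, Function.update_self i s τ⟩
    by_cases hj : j = i
    · subst hj; rw [Function.update_self]; exact hs
    · rw [Function.update_of_ne hj]; exact hτ.1 j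
  · intro τ hτ
    simp only [Finset.mem_filter] at hτ
    show Function.update (Function.update τ i t) i s = τ
    rw [Function.update_idem, ← hτ.2, Function.update_eq_self]
  · intro τ hτ
    simp only [Finset.mem_filter] at hτ
    show Function.update (Function.update τ i s) i t = τ
    rw [Function.update_idem, ← hτ.2, Function.update_eq_self]
  · intro τ hτ
    simp only [Finset.mem_filter] at hτ
    have h1 : fwdProb α τ
        = (α s - α (s + 1)) * ∏ j ∈ Finset.univ \ {i}, (α (τ j) - α (τ j + 1)) := by
      unfold fwdProb
      rw [Finset.prod_eq_mul_prod_sdiff_singleton_of_mem (Finset.mem_univ i), hτ.2]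
    show _ = (α s - α (s + 1)) * (fwdProb α (Function.update τ i t) * h (Function.update τ i t))
    rw [h1, mde_fwdProb_update, hinv]
    ring

/-- **Discrete-time ELBO for masked diffusion.** The weighted masked cross-entropy
objective lower-bounds the log-evidence `log E_Q[∏ i, r i]` of the clean sequence,
where `r i τ = π (z_{τ i + 1}(τ)) i (x i)`. -/
theorem masked_diffusion_elbo
    {V : Type*} [Fintype V] [Nonempty V] {n : ℕ} (hn : 1 ≤ n) (x : Fin n → V)
    {T : ℕ} (hT : 2 ≤ T) (α : ℕ → ℝ)
    (hα : StrictAntiOn α (Set.Icc 1 T)) (hα1 : α 1 = 1) (hαT : α T = 0)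
    (π : (Fin n → Option V) → Fin n → V → ℝ)
    (hπ : ∀ ctx i v, π ctx i v ∈ Set.Ioc (0 : ℝ) 1) :
    ∑ i, ∑ t ∈ Finset.Icc 1 (T - 1),
        expQ α T (fun τ =>
          (if maskedSeq x τ (t + 1) i = none then (1 : ℝ) else 0) *
            ((α t - α (t + 1)) / (1 - α (t + 1))) *
            Real.log (π (maskedSeq x τ (t + 1)) i (x i))) ≤
      Real.log (expQ α T (fun τ => ∏ i, π (maskedSeq x τ (τ i + 1)) i (x i))) := by
  have hT1 : T - 1 + 1 = T := by omega
  set S := Fintype.piFinset (fun _ : Fin n => Finset.Icc 1 (T - 1)) with hSdef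
  have hw : ∀ t ∈ Finset.Icc 1 (T - 1), 0 < α t - α (t + 1) := by
    intro t htm
    rw [Finset.mem_Icc] at htm
    have hmem1 : t ∈ Set.Icc 1 T := Set.mem_Icc.2 ⟨htm.1, by omega⟩
    have hmem2 : t + 1 ∈ Set.Icc 1 T := Set.mem_Icc.2 ⟨by omega, by omega⟩
    have := hα hmem1 hmem2 (by omega)
    linarith
  have htel : ∀ t : ℕ, ∑ s ∈ Finset.Icc 1 t, (α s - α (s + 1)) = 1 - α (t + 1) := by
    intro t; rw [mde_tele, hα1]
  have hone : ∀ t ∈ Finset.Icc 1 (T - 1), 0 < 1 - α (t + 1) := by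
    intro t htm
    have htm' := Finset.mem_Icc.1 htm
    rw [← htel]
    apply Finset.sum_pos
    · intro s hsm
      have hsm' := Finset.mem_Icc.1 hsm
      exact hw s (Finset.mem_Icc.2 ⟨hsm'.1, by omega⟩)
    · exact ⟨1, Finset.mem_Icc.2 ⟨le_refl 1, htm'.1⟩⟩
  have hqpos : ∀ τ ∈ S, 0 < fwdProb α τ := by
    intro τ hτ
    rw [hSdef, Fintype.mem_piFinset] at hτ
    exact Finset.prod_pos fun j _ => hw _ (hτ j)
  have hqsum : ∑ τ ∈ S, fwdProb α τ = 1 := by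
    have key := Finset.prod_univ_sum (fun _ : Fin n => Finset.Icc 1 (T - 1))
      (fun _ t => α t - α (t + 1))
    have h1 : (∏ _i : Fin n, ∑ t ∈ Finset.Icc 1 (T - 1), (α t - α (t + 1))) = 1 := by
      have : ∑ t ∈ Finset.Icc 1 (T - 1), (α t - α (t + 1)) = 1 := by
        rw [htel, hT1, hαT]; ring
      rw [Finset.prod_congr rfl fun i _ => this, Finset.prod_const_one]
    rw [hSdef]
    calc ∑ τ ∈ Fintype.piFinset (fun _ : Fin n => Finset.Icc 1 (T - 1)), fwdProb α τ
        = ∑ τ ∈ Fintype.piFinset (fun _ : Fin n => Finset.Icc 1 (T - 1)),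
            ∏ i, (α (τ i) - α (τ i + 1)) := rfl
      _ = 1 := by rw [← key]; exact h1
  -- per (i, t) identity
  have step1 : ∀ i : Fin n, ∀ t ∈ Finset.Icc 1 (T - 1),
      expQ α T (fun τ =>
        (if maskedSeq x τ (t + 1) i = none then (1 : ℝ) else 0) *
          ((α t - α (t + 1)) / (1 - α (t + 1))) *
          Real.log (π (maskedSeq x τ (t + 1)) i (x i)))
      = ∑ τ ∈ S, (if τ i = t then fwdProb α τ *
          Real.log (π (maskedSeq x τ (τ i + 1)) i (x i)) else 0) := by
    intro i t htm
    have htm' := Finset.mem_Icc.1 htm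
    set h : (Fin n → ℕ) → ℝ := fun τ =>
      Real.log (π (maskedSeq x (Function.update τ i 1) (t + 1)) i (x i)) with hhdef
    have hinv : ∀ τ u, h (Function.update τ i u) = h τ := by
      intro τ u; simp only [hhdef, Function.update_idem]
    have e1 : expQ α T (fun τ =>
        (if maskedSeq x τ (t + 1) i = none then (1 : ℝ) else 0) *
          ((α t - α (t + 1)) / (1 - α (t + 1))) *
          Real.log (π (maskedSeq x τ (t + 1)) i (x i)))
        = ((α t - α (t + 1)) / (1 - α (t + 1))) *
            ∑ τ ∈ S, (if τ i ≤ t then fwdProb α τ * h τ else 0) := by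
      unfold expQ
      rw [Finset.mul_sum]
      apply Finset.sum_congr rfl
      intro τ hτ
      by_cases hle : τ i ≤ t
      · have hnone : maskedSeq x τ (t + 1) i = none := by
          unfold maskedSeq; rw [if_neg (by omega)]
        have hms : maskedSeq x τ (t + 1) = maskedSeq x (Function.update τ i 1) (t + 1) :=
          (mde_maskedSeq_update x τ i t 1 hle (by omega)).symm
        rw [if_pos hle]
        simp only [hnone, hms, hhdef, eq_self_iff_true, if_true]
        ring
      · have hnone : ¬ maskedSeq x τ (t + 1) i = none := by
          unfold maskedSeq; rw [if_pos (by omega)]; simp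
        rw [if_neg hle]
        simp only [hnone, if_false]
        ring
    have e2 : (∑ τ ∈ S, if τ i ≤ t then fwdProb α τ * h τ else 0)
        = ∑ s ∈ Finset.Icc 1 t, ∑ τ ∈ S, (if τ i = s then fwdProb α τ * h τ else 0) := by
      rw [Finset.sum_comm]
      apply Finset.sum_congr rfl
      intro τ hτ
      have h1 : 1 ≤ τ i := by
        rw [hSdef, Fintype.mem_piFinset] at hτ
        exact (Finset.mem_Icc.1 (hτ i)).1
      rw [Finset.sum_ite_eq (Finset.Icc 1 t) (τ i) (fun _ => fwdProb α τ * h τ)]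
      by_cases hle : τ i ≤ t
      · rw [if_pos hle, if_pos (Finset.mem_Icc.2 ⟨h1, hle⟩)]
      · rw [if_neg hle, if_neg fun hc => hle (Finset.mem_Icc.1 hc).2]
    have e3 : (α t - α (t + 1)) * ∑ τ ∈ S, (if τ i ≤ t then fwdProb α τ * h τ else 0)
        = (1 - α (t + 1)) * ∑ τ ∈ S, (if τ i = t then fwdProb α τ * h τ else 0) := by
      rw [e2, Finset.mul_sum]
      have hsw : ∀ s ∈ Finset.Icc 1 t,
          (α t - α (t + 1)) * ∑ τ ∈ S, (if τ i = s then fwdProb α τ * h τ else 0)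
          = (α s - α (s + 1)) * ∑ τ ∈ S, (if τ i = t then fwdProb α τ * h τ else 0) := by
        intro s hsm
        have hsm' := Finset.mem_Icc.1 hsm
        exact mde_swap_coord α (T - 1) i s t
          (Finset.mem_Icc.2 ⟨hsm'.1, by omega⟩) htm h hinv
      rw [Finset.sum_congr rfl hsw, ← Finset.sum_mul, htel t]
    have e4 : (∑ τ ∈ S, if τ i = t then fwdProb α τ * h τ else 0)
        = ∑ τ ∈ S, (if τ i = t then fwdProb α τ *
            Real.log (π (maskedSeq x τ (τ i + 1)) i (x i)) else 0) := by
      apply Finset.sum_congr rfl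
      intro τ _
      by_cases he : τ i = t
      · have hms : maskedSeq x (Function.update τ i 1) (t + 1) = maskedSeq x τ (t + 1) :=
          mde_maskedSeq_update x τ i t 1 (le_of_eq he) (by omega)
        rw [if_pos he, if_pos he]
        simp only [hhdef, hms, he]
      · rw [if_neg he, if_neg he]
    have hone' := hone t htm
    rw [e1, ← e4, div_mul_eq_mul_div, e3, mul_comm (1 - α (t + 1)), mul_div_assoc,
      div_self (ne_of_gt hone'), mul_one]
  -- sum over t
  have stepA : ∀ i : Fin n,
      (∑ t ∈ Finset.Icc 1 (T - 1), expQ α T (fun τ =>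
        (if maskedSeq x τ (t + 1) i = none then (1 : ℝ) else 0) *
          ((α t - α (t + 1)) / (1 - α (t + 1))) *
          Real.log (π (maskedSeq x τ (t + 1)) i (x i))))
      = ∑ τ ∈ S, fwdProb α τ * Real.log (π (maskedSeq x τ (τ i + 1)) i (x i)) := by
    intro i
    rw [Finset.sum_congr rfl (step1 i), Finset.sum_comm]
    apply Finset.sum_congr rfl
    intro τ hτ
    have hmem : τ i ∈ Finset.Icc 1 (T - 1) := by
      rw [hSdef, Fintype.mem_piFinset] at hτ
      exact hτ i
    rw [Finset.sum_ite_eq (Finset.Icc 1 (T - 1)) (τ i)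
      (fun _ => fwdProb α τ * Real.log (π (maskedSeq x τ (τ i + 1)) i (x i))), if_pos hmem]
  calc ∑ i, ∑ t ∈ Finset.Icc 1 (T - 1),
        expQ α T (fun τ =>
          (if maskedSeq x τ (t + 1) i = none then (1 : ℝ) else 0) *
            ((α t - α (t + 1)) / (1 - α (t + 1))) *
            Real.log (π (maskedSeq x τ (t + 1)) i (x i)))
      = ∑ i, ∑ τ ∈ S, fwdProb α τ * Real.log (π (maskedSeq x τ (τ i + 1)) i (x i)) :=
        Finset.sum_congr rfl fun i _ => stepA i
    _ = ∑ τ ∈ S, fwdProb α τ * Real.log (∏ i, π (maskedSeq x τ (τ i + 1)) i (x i)) := by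
        rw [Finset.sum_comm]
        apply Finset.sum_congr rfl
        intro τ _
        rw [← Finset.mul_sum, Real.log_prod]
        exact fun i _ => ne_of_gt (hπ _ i (x i)).1
    _ ≤ Real.log (∑ τ ∈ S, fwdProb α τ * ∏ i, π (maskedSeq x τ (τ i + 1)) i (x i)) := by
        have hjen := (strictConcaveOn_log_Ioi.concaveOn).le_map_sum
          (t := S) (w := fwdProb α)
          (p := fun τ => ∏ i, π (maskedSeq x τ (τ i + 1)) i (x i))
          (fun τ hτ => le_of_lt (hqpos τ hτ)) hqsum
          (fun τ _ => Set.mem_Ioi.2 (Finset.prod_pos fun i _ => (hπ _ i (x i)).1))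
        simpa [smul_eq_mul] using hjen
    _ = Real.log (expQ α T (fun τ => ∏ i, π (maskedSeq x τ (τ i + 1)) i (x i))) := rfl
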